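/- The complete generating function of stack polygons, S(x,y,q) = Σ x^{width} y^{height} q^{area}, equals Σ_{n≥1} x y^n q^n / ((xq)_{n-1} (xq)_n), where (xq)_n = (1-xq)(1-xq^2)···(1-xq^n). -/

import Mathlib

/-- A stack polygon: a nonempty unimodal (weakly increasing then weakly decreasing)
list of positive column heights. Width = length, height = max, area = sum. -/
def IsStack (l : List ℕ) : Prop :=
  l ≠ [] ∧ (∀ x ∈ l, 0 < x) ∧
    ∃ l₁ l₂ : List ℕ, l = l₁ ++ l₂ ∧ l₁.Pairwise (· ≤ ·) ∧ l₂.Pairwise (· ≥ ·)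

/-- The complete generating function `S(x,y,q) = Σ x^width y^height q^area` of
stack polygons, with `x = X 0`, `y = X 1`, `q = X 2`. -/
noncomputable def stackGF : MvPowerSeries (Fin 3) ℚ :=
  fun d => (Set.ncard {l : List ℕ | IsStack l ∧ l.length = d 0 ∧
    l.foldr max 0 = d 1 ∧ l.sum = d 2} : ℚ)

/-- The part of a series in which the exponent of `y = X 1` equals `n`. -/
noncomputable def yslice (n : ℕ) (f : MvPowerSeries (Fin 3) ℚ) : MvPowerSeries (Fin 3) ℚ :=
  fun d => if d 1 = n then f d else 0

namespace StackAux

open MvPowerSeries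

/-- The multidegree (width, 0, area) of a list. -/
noncomputable def deg (l : List ℕ) : Fin 3 →₀ ℕ :=
  Finsupp.single 0 l.length + Finsupp.single 2 l.sum

@[simp] lemma deg0 (l : List ℕ) : deg l 0 = l.length := by
  simp [deg, Finsupp.single_apply]

@[simp] lemma deg1 (l : List ℕ) : deg l 1 = 0 := by
  simp [deg, Finsupp.single_apply]

@[simp] lemma deg2 (l : List ℕ) : deg l 2 = l.sum := by
  simp [deg, Finsupp.single_apply]

lemma deg_append (A B : List ℕ) : deg (A ++ B) = deg A + deg B := by
  simp only [deg, List.length_append, List.sum_append, Finsupp.single_add]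
  abel

@[simp] lemma deg_nil : deg ([] : List ℕ) = 0 := by simp [deg]

@[simp] lemma deg_reverse (l : List ℕ) : deg l.reverse = deg l := by
  simp [deg, List.sum_reverse]

/-- Weakly increasing lists with entries in `[1, k]`. -/
def IncP (k : ℕ) (l : List ℕ) : Prop :=
  l.Pairwise (· ≤ ·) ∧ ∀ x ∈ l, 0 < x ∧ x ≤ k

/-- Weakly decreasing lists with entries in `[1, k]`. -/
def DecP (k : ℕ) (l : List ℕ) : Prop :=
  l.Pairwise (· ≥ ·) ∧ ∀ x ∈ l, 0 < x ∧ x ≤ k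

noncomputable def incGF (k : ℕ) : MvPowerSeries (Fin 3) ℚ :=
  fun d => ({l : List ℕ | IncP k l ∧ deg l = d}.ncard : ℚ)

noncomputable def decGF (k : ℕ) : MvPowerSeries (Fin 3) ℚ :=
  fun d => ({l : List ℕ | DecP k l ∧ deg l = d}.ncard : ℚ)

lemma fin3 (i : Fin 3) : i = 0 ∨ i = 1 ∨ i = 2 := by omega

/-- Finiteness of sets of positive lists of fixed degree. -/
lemma finite_deg {P : List ℕ → Prop} (hP : ∀ l, P l → ∀ x ∈ l, 0 < x) (d : Fin 3 →₀ ℕ) :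
    {l : List ℕ | P l ∧ deg l = d}.Finite := by
  rw [← Set.finite_coe_iff]
  refine Finite.of_injective (fun l =>
    (⟨l.1, fun hx => hP _ l.2.1 _ hx, ?_⟩ : Composition (d 2))) ?_
  · simpa using DFunLike.congr_fun l.2.2 2
  · intro a b h
    exact Subtype.ext (congrArg Composition.blocks h)

lemma ncard_prod {α β : Type*} (s : Set α) (t : Set β) :
    (s ×ˢ t).ncard = s.ncard * t.ncard := by
  rw [← Nat.card_coe_set_eq, ← Nat.card_coe_set_eq, ← Nat.card_coe_set_eq,
    ← Nat.card_prod]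
  exact Nat.card_congr (Equiv.Set.prod s t)

lemma ncard_biUnion {ι α : Type*} (t : ι → Set α) (s : Finset ι) :
    (∀ i ∈ s, (t i).Finite) → (∀ i ∈ s, ∀ j ∈ s, i ≠ j → Disjoint (t i) (t j)) →
    (⋃ i ∈ s, t i).ncard = ∑ i ∈ s, (t i).ncard := by
  classical
  induction s using Finset.induction_on with
  | empty => simp
  | @insert a s ha ih =>
    intro hf hd
    rw [Finset.sum_insert ha]
    have hu : (⋃ i ∈ insert a s, t i) = t a ∪ ⋃ i ∈ s, t i := by
      simp [Set.biUnion_insert]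
    have hfin2 : (⋃ i ∈ s, t i).Finite := by
      have := Set.Finite.biUnion s.finite_toSet
        (fun i (hi : i ∈ (↑s : Set ι)) => hf i (Finset.mem_insert_of_mem hi))
      simpa using this
    have hdisj : Disjoint (t a) (⋃ i ∈ s, t i) := by
      simp only [Set.disjoint_iUnion_right]
      intro i hi
      exact hd a (Finset.mem_insert_self a s) i (Finset.mem_insert_of_mem hi)
        (by rintro rfl; exact ha hi)
    rw [hu, Set.ncard_union_eq hdisj (hf a (Finset.mem_insert_self a s)) hfin2,
      ih (fun i hi => hf i (Finset.mem_insert_of_mem hi))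
        (fun i hi j hj hij => hd i (Finset.mem_insert_of_mem hi) j
          (Finset.mem_insert_of_mem hj) hij)]

/-- Convolution: the coefficient of `incGF k * decGF m` counts pairs. -/
lemma mul_count (k m : ℕ) (d : Fin 3 →₀ ℕ) :
    (incGF k * decGF m) d =
      ({p : List ℕ × List ℕ | IncP k p.1 ∧ DecP m p.2 ∧ deg p.1 + deg p.2 = d}.ncard : ℚ) := by
  classical
  have h0 : (incGF k * decGF m) d = ∑ p ∈ Finset.HasAntidiagonal.antidiagonal d,
      (({l : List ℕ | IncP k l ∧ deg l = p.1} ×ˢ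
        {l : List ℕ | DecP m l ∧ deg l = p.2}).ncard : ℚ) := by
    rw [show (incGF k * decGF m) d = coeff d (incGF k * decGF m) from rfl, coeff_mul]
    refine Finset.sum_congr rfl fun p _ => ?_
    rw [ncard_prod]
    push_cast
    rfl
  rw [h0, ← Nat.cast_sum]
  congr 1
  have hu : {p : List ℕ × List ℕ | IncP k p.1 ∧ DecP m p.2 ∧ deg p.1 + deg p.2 = d}
      = ⋃ q ∈ Finset.HasAntidiagonal.antidiagonal d,
        ({l : List ℕ | IncP k l ∧ deg l = q.1} ×ˢ {l : List ℕ | DecP m l ∧ deg l = q.2}) := by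
    ext p
    simp only [Set.mem_setOf_eq, Set.mem_iUnion, Set.mem_prod, Finset.HasAntidiagonal.mem_antidiagonal]
    constructor
    · rintro ⟨h1, h2, h3⟩
      exact ⟨(deg p.1, deg p.2), h3, ⟨h1, rfl⟩, h2, rfl⟩
    · rintro ⟨q, hq, ⟨h1, h2⟩, h3, h4⟩
      exact ⟨h1, h3, by rw [h2, h4, hq]⟩
  have hfin : ∀ q ∈ Finset.HasAntidiagonal.antidiagonal d,
      ({l : List ℕ | IncP k l ∧ deg l = q.1} ×ˢ
        {l : List ℕ | DecP m l ∧ deg l = q.2}).Finite := fun q _ =>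
    (finite_deg (P := IncP k) (fun l hl x hx => (hl.2 x hx).1) q.1).prod
      (finite_deg (P := DecP m) (fun l hl x hx => (hl.2 x hx).1) q.2)
  have hdis : ∀ q ∈ Finset.HasAntidiagonal.antidiagonal d, ∀ r ∈ Finset.HasAntidiagonal.antidiagonal d, q ≠ r →
      Disjoint ({l : List ℕ | IncP k l ∧ deg l = q.1} ×ˢ
          {l : List ℕ | DecP m l ∧ deg l = q.2})
        ({l : List ℕ | IncP k l ∧ deg l = r.1} ×ˢ
          {l : List ℕ | DecP m l ∧ deg l = r.2}) := by
    intro q _ r _ hqr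
    rw [Set.disjoint_left]
    rintro p ⟨⟨_, hq1⟩, _, hq2⟩ ⟨⟨_, hr1⟩, _, hr2⟩
    exact hqr (Prod.ext (hq1.symm.trans hr1) (hq2.symm.trans hr2))
  rw [hu, ncard_biUnion _ _ hfin hdis]

lemma incGF_zero : incGF 0 = 1 := by
  apply MvPowerSeries.ext
  intro d
  show (({l : List ℕ | IncP 0 l ∧ deg l = d}).ncard : ℚ) = coeff d 1
  rw [coeff_one]
  by_cases hd : d = 0
  · subst hd
    rw [if_pos rfl]
    have h : {l : List ℕ | IncP 0 l ∧ deg l = 0} = {([] : List ℕ)} := by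
      ext l
      simp only [Set.mem_setOf_eq, Set.mem_singleton_iff]
      constructor
      · rintro ⟨⟨_, hpos⟩, _⟩
        cases l with
        | nil => rfl
        | cons a t => exact absurd (hpos a (by simp)) (by have := (hpos a (by simp)).2; omega)
      · rintro rfl
        exact ⟨⟨List.Pairwise.nil, by simp⟩, by simp⟩
    rw [h, Set.ncard_singleton]
    norm_num
  · rw [if_neg hd]
    have h : {l : List ℕ | IncP 0 l ∧ deg l = d} = ∅ := by
      rw [Set.eq_empty_iff_forall_notMem]
      rintro l ⟨⟨_, hpos⟩, hdeg⟩
      cases l with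
      | nil => exact hd (by rw [← hdeg]; simp)
      | cons a t =>
        have := hpos a (by simp)
        omega
    rw [h]
    simp

/-- `(1, 0, a)` as a multidegree. -/
noncomputable def eps (a : ℕ) : Fin 3 →₀ ℕ :=
  Finsupp.single 0 1 + Finsupp.single 2 a

@[simp] lemma eps0 (a : ℕ) : eps a 0 = 1 := by simp [eps, Finsupp.single_apply]
@[simp] lemma eps1 (a : ℕ) : eps a 1 = 0 := by simp [eps, Finsupp.single_apply]
@[simp] lemma eps2 (a : ℕ) : eps a 2 = a := by simp [eps, Finsupp.single_apply]

lemma deg_single (a : ℕ) : deg [a] = eps a := by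
  simp [deg, eps]

lemma eps_le_iff (a : ℕ) (d : Fin 3 →₀ ℕ) : eps a ≤ d ↔ 1 ≤ d 0 ∧ a ≤ d 2 := by
  rw [Finsupp.le_def]
  constructor
  · intro h
    exact ⟨by simpa using h 0, by simpa using h 2⟩
  · rintro ⟨h1, h2⟩ i
    rcases fin3 i with rfl | rfl | rfl <;> simp [h1, h2]

lemma X_mul_pow (a : ℕ) :
    (X 0 * X 2 ^ a : MvPowerSeries (Fin 3) ℚ) = monomial (eps a) 1 := by
  rw [X_pow_eq, show (X 0 : MvPowerSeries (Fin 3) ℚ)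
    = monomial (Finsupp.single 0 1) 1 from rfl, monomial_mul_monomial, one_mul]
  rfl

/-- A sorted list containing its upper bound `m` ends with `m`. -/
lemma eq_append_last {l : List ℕ} {m : ℕ} (hs : l.Pairwise (· ≤ ·))
    (hb : ∀ x ∈ l, x ≤ m) (hm : m ∈ l) : ∃ l', l = l' ++ [m] := by
  induction l with
  | nil => cases hm
  | cons a t ih =>
    by_cases ht : t = []
    · subst ht
      have : m = a := by simpa using hm
      exact ⟨[], by simp [this]⟩
    · have hmt : m ∈ t := by
        rcases List.mem_cons.mp hm with rfl | h
        · obtain ⟨b, t', rfl⟩ := List.exists_cons_of_ne_nil ht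
          have h1 : m ≤ b := (List.pairwise_cons.mp hs).1 b (by simp)
          have h2 : b ≤ m := hb b (by simp)
          simp [le_antisymm h2 h1]
        · exact h
      obtain ⟨l', rfl⟩ := ih hs.of_cons (fun x hx => hb x (by simp [hx])) hmt
      exact ⟨a :: l', by simp⟩

/-- The recursion `(1 - x q^{k+1}) · incGF (k+1) = incGF k`. -/
lemma inc_rec (k : ℕ) :
    ((1 : MvPowerSeries (Fin 3) ℚ) - X 0 * X 2 ^ (k + 1)) * incGF (k + 1) = incGF k := by
  have key : ∀ d : Fin 3 →₀ ℕ,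
      ({l : List ℕ | IncP (k+1) l ∧ deg l = d}.ncard : ℚ)
        = ({l : List ℕ | IncP k l ∧ deg l = d}.ncard : ℚ)
          + (if eps (k+1) ≤ d then
              ({l : List ℕ | IncP (k+1) l ∧ deg l = d - eps (k+1)}.ncard : ℚ) else 0) := by
    intro d
    have hsplit : {l : List ℕ | IncP (k+1) l ∧ deg l = d}
        = {l : List ℕ | IncP k l ∧ deg l = d}
          ∪ {l : List ℕ | (IncP (k+1) l ∧ deg l = d) ∧ (k+1) ∈ l} := by
      ext l
      simp only [Set.mem_setOf_eq, Set.mem_union]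
      constructor
      · rintro ⟨⟨hs, hb⟩, hd⟩
        by_cases hm : (k+1) ∈ l
        · exact Or.inr ⟨⟨⟨hs, hb⟩, hd⟩, hm⟩
        · refine Or.inl ⟨⟨hs, fun x hx => ⟨(hb x hx).1, ?_⟩⟩, hd⟩
          have h1 := (hb x hx).2
          have h2 : x ≠ k + 1 := fun h => hm (h ▸ hx)
          omega
      · rintro (⟨⟨hs, hb⟩, hd⟩ | ⟨h, _⟩)
        · exact ⟨⟨hs, fun x hx => ⟨(hb x hx).1, by have := (hb x hx).2; omega⟩⟩, hd⟩
        · exact h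
    have hdisj : Disjoint {l : List ℕ | IncP k l ∧ deg l = d}
        {l : List ℕ | (IncP (k+1) l ∧ deg l = d) ∧ (k+1) ∈ l} := by
      rw [Set.disjoint_left]
      rintro l ⟨⟨_, hb⟩, _⟩ ⟨_, hm⟩
      have := (hb _ hm).2
      omega
    have hfin1 : {l : List ℕ | IncP k l ∧ deg l = d}.Finite :=
      finite_deg (fun l hl x hx => (hl.2 x hx).1) d
    have hfin2 : {l : List ℕ | (IncP (k+1) l ∧ deg l = d) ∧ (k+1) ∈ l}.Finite :=
      (finite_deg (P := fun l => IncP (k+1) l) (fun l hl x hx => (hl.2 x hx).1) d).subset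
        (fun l hl => hl.1)
    rw [hsplit, Set.ncard_union_eq hdisj hfin1 hfin2]
    push_cast
    congr 1
    by_cases he : eps (k+1) ≤ d
    · rw [if_pos he]
      have himg : {l : List ℕ | (IncP (k+1) l ∧ deg l = d) ∧ (k+1) ∈ l}
          = (fun l => l ++ [k+1]) '' {l : List ℕ | IncP (k+1) l ∧ deg l = d - eps (k+1)} := by
        ext l
        simp only [Set.mem_setOf_eq, Set.mem_image]
        constructor
        · rintro ⟨⟨⟨hs, hb⟩, hd⟩, hm⟩
          obtain ⟨l', rfl⟩ := eq_append_last hs (fun x hx => (hb x hx).2) hm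
          refine ⟨l', ⟨⟨hs.sublist (List.sublist_append_left _ _),
            fun x hx => hb x (by simp [hx])⟩, ?_⟩, rfl⟩
          rw [deg_append, deg_single] at hd
          exact eq_tsub_of_add_eq hd
        · rintro ⟨l', ⟨⟨hs, hb⟩, hd⟩, rfl⟩
          refine ⟨⟨⟨?_, ?_⟩, ?_⟩, by simp⟩
          · refine List.pairwise_append.mpr ⟨hs, List.pairwise_singleton _ _, ?_⟩
            intro x hx y hy
            simp only [List.mem_singleton] at hy
            subst hy
            exact (hb x hx).2
          · intro x hx
            rcases List.mem_append.mp hx with h | h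
            · exact hb x h
            · simp only [List.mem_singleton] at h
              omega
          · rw [deg_append, deg_single, hd, tsub_add_cancel_of_le he]
      rw [himg, Set.ncard_image_of_injOn
        (Set.injOn_of_injective (List.append_left_injective [k+1]))]
    · rw [if_neg he]
      have : {l : List ℕ | (IncP (k+1) l ∧ deg l = d) ∧ (k+1) ∈ l} = ∅ := by
        rw [Set.eq_empty_iff_forall_notMem]
        rintro l ⟨⟨_, hd⟩, hm⟩
        refine he ((eps_le_iff _ _).mpr ⟨?_, ?_⟩)
        · rw [← hd, deg0]
          exact List.length_pos_iff.mpr (List.ne_nil_of_mem hm)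
        · rw [← hd, deg2]
          exact List.single_le_sum (fun _ _ => Nat.zero_le _) _ hm
      rw [this]
      simp
  apply MvPowerSeries.ext
  intro d
  have h1 : coeff d (((1 : MvPowerSeries (Fin 3) ℚ) - X 0 * X 2 ^ (k + 1)) * incGF (k + 1))
      = coeff d (incGF (k+1)) - coeff d ((X 0 * X 2 ^ (k+1)) * incGF (k+1)) := by
    rw [sub_mul, one_mul, map_sub]
  rw [h1, X_mul_pow, coeff_monomial_mul]
  have h2 : coeff d (incGF (k+1)) = ({l : List ℕ | IncP (k+1) l ∧ deg l = d}.ncard : ℚ) := rfl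
  have h3 : coeff d (incGF k) = ({l : List ℕ | IncP k l ∧ deg l = d}.ncard : ℚ) := rfl
  show _ = coeff d (incGF k)
  rw [h2, h3, key d]
  by_cases he : eps (k+1) ≤ d
  · rw [if_pos he, if_pos he, one_mul]
    have : coeff (d - eps (k+1)) (incGF (k+1))
        = ({l : List ℕ | IncP (k+1) l ∧ deg l = d - eps (k+1)}.ncard : ℚ) := rfl
    rw [this]
    ring
  · rw [if_neg he, if_neg he]
    ring

lemma prod_inc (k : ℕ) :
    (∏ i ∈ Finset.range k, (1 - X 0 * X 2 ^ (i + 1) : MvPowerSeries (Fin 3) ℚ)) * incGF k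
      = 1 := by
  induction k with
  | zero => simp [incGF_zero]
  | succ k ih =>
    rw [Finset.prod_range_succ, mul_assoc, inc_rec k]
    exact ih

lemma dec_eq_inc (k : ℕ) : decGF k = incGF k := by
  apply MvPowerSeries.ext
  intro d
  show (({l : List ℕ | DecP k l ∧ deg l = d}).ncard : ℚ)
    = (({l : List ℕ | IncP k l ∧ deg l = d}).ncard : ℚ)
  congr 1
  rw [show {l : List ℕ | DecP k l ∧ deg l = d}
      = List.reverse '' {l : List ℕ | IncP k l ∧ deg l = d} from ?_,
    Set.ncard_image_of_injOn (Set.injOn_of_injective List.reverse_injective)]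
  ext l
  simp only [Set.mem_image, Set.mem_setOf_eq]
  constructor
  · rintro ⟨⟨hs, hb⟩, hd⟩
    refine ⟨l.reverse, ⟨⟨List.pairwise_reverse.mpr hs,
      fun x hx => hb x (List.mem_reverse.mp hx)⟩, by rw [deg_reverse]; exact hd⟩,
      List.reverse_reverse l⟩
  · rintro ⟨m, ⟨⟨hs, hb⟩, hd⟩, rfl⟩
    exact ⟨⟨List.pairwise_reverse.mpr hs, fun x hx => hb x (List.mem_reverse.mp hx)⟩,
      by rw [deg_reverse]; exact hd⟩

lemma le_foldr_max {l : List ℕ} {x : ℕ} (h : x ∈ l) : x ≤ l.foldr max 0 := by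
  induction l with
  | nil => cases h
  | cons a t ih =>
    rcases List.mem_cons.mp h with rfl | h
    · exact le_max_left _ _
    · exact le_trans (ih h) (le_max_right _ _)

lemma foldr_max_le {l : List ℕ} {n : ℕ} (h : ∀ x ∈ l, x ≤ n) : l.foldr max 0 ≤ n := by
  induction l with
  | nil => exact Nat.zero_le n
  | cons a t ih =>
    exact max_le (h a (by simp)) (ih fun x hx => h x (by simp [hx]))

lemma foldr_max_mem {l : List ℕ} (h : l ≠ []) : l.foldr max 0 ∈ l := by
  induction l with
  | nil => exact absurd rfl h
  | cons a t ih =>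
    by_cases ht : t = []
    · subst ht; simp
    · have hmem := ih ht
      show max a (t.foldr max 0) ∈ a :: t
      rcases le_total a (t.foldr max 0) with hle | hle
      · rw [max_eq_right hle]
        exact List.mem_cons_of_mem _ hmem
      · rw [max_eq_left hle]
        exact List.mem_cons_self

lemma split_first {n : ℕ} {l : List ℕ} (h : n ∈ l) : ∃ A B, l = A ++ n :: B ∧ n ∉ A := by
  induction l with
  | nil => cases h
  | cons a t ih =>
    by_cases ha : a = n
    · exact ⟨[], t, by rw [ha]; rfl, by simp⟩
    · have hnt : n ∈ t := by
        rcases List.mem_cons.mp h with h' | h'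
        · exact absurd h'.symm ha
        · exact h'
      obtain ⟨A, B, rfl, hA⟩ := ih hnt
      exact ⟨a :: A, B, rfl, by
        simp only [List.mem_cons, not_or]
        exact ⟨fun h' => ha h'.symm, hA⟩⟩

lemma pairwise_ge_of_const {n : ℕ} : ∀ (L : List ℕ), (∀ y ∈ L, y = n) → L.Pairwise (· ≥ ·) := by
  intro L
  induction L with
  | nil => intro _; exact List.Pairwise.nil
  | cons a t ih =>
    intro h
    exact List.pairwise_cons.mpr ⟨fun y hy => by
      rw [h a (by simp), h y (by simp [hy])], ih fun y hy => h y (by simp [hy])⟩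

/-- Splitting a stack of height `n` at its first maximum. -/
lemma stack_split {n : ℕ} {l₁ l₂ : List ℕ} (h1 : l₁.Pairwise (· ≤ ·)) (h2 : l₂.Pairwise (· ≥ ·))
    (hub : ∀ x ∈ l₁ ++ l₂, x ≤ n) (hmem : n ∈ l₁ ++ l₂) :
    ∃ A B, l₁ ++ l₂ = A ++ n :: B ∧ A.Pairwise (· ≤ ·) ∧ (∀ x ∈ A, x ≤ n - 1 ∧ x ≠ n)
      ∧ B.Pairwise (· ≥ ·) ∧ (∀ x ∈ B, x ≤ n) := by
  by_cases hmem1 : n ∈ l₁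
  · obtain ⟨A, C, rfl, hnA⟩ := split_first hmem1
    have hsnC : (n :: C).Pairwise (· ≤ ·) := h1.sublist (List.sublist_append_right A _)
    have hAle : ∀ x ∈ A, x ≤ n - 1 ∧ x ≠ n := by
      intro x hx
      have hxn : x ≤ n := (List.pairwise_append.mp h1).2.2 x hx n (by simp)
      have hne : x ≠ n := fun h => hnA (h ▸ hx)
      exact ⟨by omega, hne⟩
    have hCeq : ∀ y ∈ C, y = n := by
      intro y hy
      have hny : n ≤ y := (List.pairwise_cons.mp hsnC).1 y hy
      have hyn : y ≤ n := hub y (by simp [hy])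
      omega
    refine ⟨A, C ++ l₂, by simp, h1.sublist (List.sublist_append_left A _), hAle, ?_, ?_⟩
    · refine List.pairwise_append.mpr ⟨pairwise_ge_of_const C hCeq, h2, ?_⟩
      intro x hx y hy
      rw [hCeq x hx]
      exact hub y (by simp [hy])
    · intro x hx
      rcases List.mem_append.mp hx with h | h
      · rw [hCeq x h]
      · exact hub x (by simp [h])
  · have hmem2 : n ∈ l₂ := by
      rcases List.mem_append.mp hmem with h | h
      · exact absurd h hmem1
      · exact h
    obtain ⟨b, t, rfl⟩ := List.exists_cons_of_ne_nil (List.ne_nil_of_mem hmem2)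
    have hbn : b = n := by
      have h1' : n ≤ b := by
        rcases List.mem_cons.mp hmem2 with h' | h'
        · exact le_of_eq h'
        · exact (List.pairwise_cons.mp h2).1 n h'
      have h2' : b ≤ n := hub b (by simp)
      omega
    subst hbn
    refine ⟨l₁, t, rfl, h1, ?_, h2.of_cons, fun x hx => hub x (by simp [hx])⟩
    intro x hx
    have hxn : x ≤ b := hub x (List.mem_append_left _ hx)
    have hne : x ≠ b := fun h => hmem1 (h ▸ hx)
    exact ⟨by omega, hne⟩

lemma append_cons_inj {n : ℕ} : ∀ {A A' B B' : List ℕ}, n ∉ A → n ∉ A' →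
    A ++ n :: B = A' ++ n :: B' → A = A' ∧ B = B' := by
  intro A
  induction A with
  | nil =>
    intro A' B B' _ hA' h
    cases A' with
    | nil => simpa using h
    | cons a t =>
      simp only [List.nil_append, List.cons_append, List.cons.injEq] at h
      exact absurd (by rw [h.1]; exact List.mem_cons_self) hA'
  | cons a s ih =>
    intro A' B B' hA hA' h
    cases A' with
    | nil =>
      simp only [List.cons_append, List.nil_append, List.cons.injEq] at h
      exact absurd (by rw [← h.1]; exact List.mem_cons_self) hA
    | cons a' t =>
      simp only [List.cons_append, List.cons.injEq] at h
      obtain ⟨rfl, h2⟩ := h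
      have hs : n ∉ s := fun h' => hA (List.mem_cons_of_mem _ h')
      have ht : n ∉ t := fun h' => hA' (List.mem_cons_of_mem _ h')
      obtain ⟨rfl, rfl⟩ := ih hs ht h2
      exact ⟨rfl, rfl⟩

/-- The central bijection: stacks of height `n`, width `w+1`, area `s+n` correspond to
pairs of an increasing list with parts `≤ n-1` and a decreasing list with parts `≤ n`. -/
lemma stack_bij (n w s : ℕ) (hn : 1 ≤ n) :
    {l : List ℕ | IsStack l ∧ l.length = w + 1 ∧ l.foldr max 0 = n ∧ l.sum = s + n}.ncard
      = {p : List ℕ × List ℕ | IncP (n-1) p.1 ∧ DecP n p.2 ∧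
          p.1.length + p.2.length = w ∧ p.1.sum + p.2.sum = s}.ncard := by
  have himg : (fun p : List ℕ × List ℕ => p.1 ++ n :: p.2) ''
      {p : List ℕ × List ℕ | IncP (n-1) p.1 ∧ DecP n p.2 ∧
          p.1.length + p.2.length = w ∧ p.1.sum + p.2.sum = s}
      = {l : List ℕ | IsStack l ∧ l.length = w + 1 ∧ l.foldr max 0 = n ∧ l.sum = s + n} := by
    ext l
    simp only [Set.mem_image, Set.mem_setOf_eq]
    constructor
    · rintro ⟨⟨A, B⟩, ⟨⟨hAs, hAb⟩, ⟨hBs, hBb⟩, hlen, hsum⟩, rfl⟩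
      dsimp only at hlen hsum hAs hAb hBs hBb
      have hub : ∀ x ∈ A ++ n :: B, x ≤ n := by
        intro x hx
        rcases List.mem_append.mp hx with h | h
        · have := (hAb x h).2; omega
        · rcases List.mem_cons.mp h with rfl | h'
          · exact le_refl x
          · exact (hBb x h').2
      refine ⟨⟨by simp, ?_, A ++ [n], B, by simp, ?_, hBs⟩, ?_, ?_, ?_⟩
      · intro x hx
        rcases List.mem_append.mp hx with h | h
        · exact (hAb x h).1
        · rcases List.mem_cons.mp h with rfl | h'
          · omega
          · exact (hBb x h').1
      · refine List.pairwise_append.mpr ⟨hAs, List.pairwise_singleton _ _, ?_⟩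
        intro x hx y hy
        simp only [List.mem_singleton] at hy
        subst hy
        have := (hAb x hx).2
        omega
      · simp only [List.length_append, List.length_cons]
        omega
      · refine le_antisymm (foldr_max_le hub) (le_foldr_max ?_)
        simp
      · simp only [List.sum_append, List.sum_cons]
        omega
    · rintro ⟨⟨hne, hpos, l₁, l₂, rfl, h1, h2⟩, hlen, hmax, hsum⟩
      have hub : ∀ x ∈ l₁ ++ l₂, x ≤ n := fun x hx => hmax ▸ le_foldr_max hx
      have hmem : n ∈ l₁ ++ l₂ := hmax ▸ foldr_max_mem hne
      obtain ⟨A, B, hAB, hAs, hAb, hBs, hBb⟩ := stack_split h1 h2 hub hmem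
      have hlen' : A.length + (B.length + 1) = w + 1 := by
        rw [hAB] at hlen
        simpa using hlen
      have hsum' : A.sum + (n + B.sum) = s + n := by
        rw [hAB] at hsum
        simpa using hsum
      refine ⟨(A, B), ⟨⟨hAs, fun x hx => ⟨hpos x (by rw [hAB]; simp [hx]), (hAb x hx).1⟩⟩,
        ⟨hBs, fun x hx => ⟨hpos x (by rw [hAB]; simp [hx]), hBb x hx⟩⟩,
        by show A.length + B.length = w; omega, by show A.sum + B.sum = s; omega⟩, hAB.symm⟩
  rw [← himg, Set.ncard_image_of_injOn ?_]
  rintro ⟨A, B⟩ ⟨⟨_, hAb⟩, _⟩ ⟨A', B'⟩ ⟨⟨_, hAb'⟩, _⟩ h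
  simp only at h
  have hA : n ∉ A := fun hm => by have := (hAb n hm).2; omega
  have hA' : n ∉ A' := fun hm => by have := (hAb' n hm).2; omega
  obtain ⟨rfl, rfl⟩ := append_cons_inj hA hA' h
  rfl

/-- `(1, n, n)` as a multidegree. -/
noncomputable def E (n : ℕ) : Fin 3 →₀ ℕ :=
  Finsupp.single 0 1 + Finsupp.single 1 n + Finsupp.single 2 n

@[simp] lemma E0 (n : ℕ) : E n 0 = 1 := by simp [E, Finsupp.single_apply]
@[simp] lemma E1 (n : ℕ) : E n 1 = n := by simp [E, Finsupp.single_apply]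
@[simp] lemma E2 (n : ℕ) : E n 2 = n := by simp [E, Finsupp.single_apply]

lemma X_prod_eq (n : ℕ) :
    (X 0 * X 1 ^ n * X 2 ^ n : MvPowerSeries (Fin 3) ℚ) = monomial (E n) 1 := by
  rw [X_pow_eq, X_pow_eq, show (X 0 : MvPowerSeries (Fin 3) ℚ)
    = monomial (Finsupp.single 0 1) 1 from rfl, monomial_mul_monomial,
    monomial_mul_monomial, one_mul, one_mul]
  rfl

lemma slice_eq (n : ℕ) (hn : 1 ≤ n) :
    yslice n stackGF
      = (X 0 * X 1 ^ n * X 2 ^ n : MvPowerSeries (Fin 3) ℚ) * (incGF (n-1) * decGF n) := by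
  rw [X_prod_eq]
  funext d
  have hrhs : (monomial (E n) 1 * (incGF (n-1) * decGF n) : MvPowerSeries (Fin 3) ℚ) d
      = if E n ≤ d then
          ({p : List ℕ × List ℕ | IncP (n-1) p.1 ∧ DecP n p.2
            ∧ deg p.1 + deg p.2 = d - E n}.ncard : ℚ)
        else 0 := by
    rw [show (monomial (E n) 1 * (incGF (n-1) * decGF n) : MvPowerSeries (Fin 3) ℚ) d
      = coeff d (monomial (E n) 1 * (incGF (n-1) * decGF n)) from rfl, coeff_monomial_mul]
    by_cases he : E n ≤ d
    · rw [if_pos he, if_pos he, one_mul]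
      exact mul_count (n-1) n (d - E n)
    · rw [if_neg he, if_neg he]
  rw [hrhs]
  show (if d 1 = n then stackGF d else 0) = _
  by_cases h1 : d 1 = n
  · rw [if_pos h1]
    by_cases he : E n ≤ d
    · rw [if_pos he]
      have hd0 : 1 ≤ d 0 := by simpa using Finsupp.le_def.mp he 0
      have hd2 : n ≤ d 2 := by simpa using Finsupp.le_def.mp he 2
      show (({l : List ℕ | IsStack l ∧ l.length = d 0 ∧ l.foldr max 0 = d 1
          ∧ l.sum = d 2}).ncard : ℚ) = _
      have hsets1 : {l : List ℕ | IsStack l ∧ l.length = d 0 ∧ l.foldr max 0 = d 1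
            ∧ l.sum = d 2}
          = {l : List ℕ | IsStack l ∧ l.length = (d 0 - 1) + 1 ∧ l.foldr max 0 = n
            ∧ l.sum = (d 2 - n) + n} := by
        ext l
        simp only [Set.mem_setOf_eq]
        constructor
        · rintro ⟨h, h', h'', h'''⟩
          exact ⟨h, by omega, by omega, by omega⟩
        · rintro ⟨h, h', h'', h'''⟩
          exact ⟨h, by omega, by omega, by omega⟩
      have hsets2 : {p : List ℕ × List ℕ | IncP (n-1) p.1 ∧ DecP n p.2
            ∧ deg p.1 + deg p.2 = d - E n}
          = {p : List ℕ × List ℕ | IncP (n-1) p.1 ∧ DecP n p.2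
            ∧ p.1.length + p.2.length = d 0 - 1 ∧ p.1.sum + p.2.sum = d 2 - n} := by
        ext p
        simp only [Set.mem_setOf_eq]
        constructor
        · rintro ⟨hA, hB, hd⟩
          refine ⟨hA, hB, ?_, ?_⟩
          · have h0 := DFunLike.congr_fun hd 0
            simpa [Finsupp.tsub_apply] using h0
          · have h0 := DFunLike.congr_fun hd 2
            simpa [Finsupp.tsub_apply] using h0
        · rintro ⟨hA, hB, hl, hs⟩
          refine ⟨hA, hB, ?_⟩
          ext i
          rcases fin3 i with rfl | rfl | rfl <;>
            simp [Finsupp.tsub_apply, hl, hs] <;> omega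
      rw [hsets1, hsets2]
      exact_mod_cast congrArg (fun m : ℕ => (m : ℚ)) (stack_bij n (d 0 - 1) (d 2 - n) hn)
    · rw [if_neg he]
      show (({l : List ℕ | IsStack l ∧ l.length = d 0 ∧ l.foldr max 0 = d 1
          ∧ l.sum = d 2}).ncard : ℚ) = 0
      have hempty : {l : List ℕ | IsStack l ∧ l.length = d 0 ∧ l.foldr max 0 = d 1
          ∧ l.sum = d 2} = ∅ := by
        rw [Set.eq_empty_iff_forall_notMem]
        rintro l ⟨⟨hne, hpos, _⟩, hlen, hmax, hsum⟩
        have h4 : n ∈ l := by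
          have := foldr_max_mem hne
          rwa [hmax, h1] at this
        have h5 : 1 ≤ d 0 := hlen ▸ List.length_pos_iff.mpr hne
        have h6 : n ≤ d 2 := hsum ▸ List.single_le_sum (fun _ _ => Nat.zero_le _) _ h4
        refine he (Finsupp.le_def.mpr fun i => ?_)
        rcases fin3 i with rfl | rfl | rfl <;> simp <;> omega
      rw [hempty]
      simp
  · rw [if_neg h1]
    by_cases he : E n ≤ d
    · rw [if_pos he]
      have hgt : n < d 1 := by
        have := Finsupp.le_def.mp he 1
        simp only [E1] at this
        omega
      have hempty : {p : List ℕ × List ℕ | IncP (n-1) p.1 ∧ DecP n p.2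
          ∧ deg p.1 + deg p.2 = d - E n} = ∅ := by
        rw [Set.eq_empty_iff_forall_notMem]
        rintro ⟨A, B⟩ ⟨_, _, hd⟩
        have h0 := DFunLike.congr_fun hd 1
        simp only [Finsupp.add_apply, Finsupp.tsub_apply, deg1, E1] at h0
        omega
      rw [hempty]
      simp
    · rw [if_neg he]

end StackAux

open MvPowerSeries in
/-- `S(x,y,q) = Σ_{n≥1} x yⁿ qⁿ / ((xq)_{n-1}(xq)_n)` where
`(xq)_n = (1-xq)(1-xq²)⋯(1-xqⁿ)`: the part of `S` of `y`-degree `n` (stacks of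
height `n`) equals `x yⁿ qⁿ / ((xq)_{n-1}(xq)_n)`. -/
theorem stack_complete_gf :
    ∀ n : ℕ, 1 ≤ n →
      (∏ i ∈ Finset.range (n - 1), (1 - X 0 * X 2 ^ (i + 1) : MvPowerSeries (Fin 3) ℚ)) *
      (∏ i ∈ Finset.range n, (1 - X 0 * X 2 ^ (i + 1) : MvPowerSeries (Fin 3) ℚ)) *
          yslice n stackGF = X 0 * X 1 ^ n * X 2 ^ n := by
  intro n hn
  rw [StackAux.slice_eq n hn, StackAux.dec_eq_inc n]
  have h1 := StackAux.prod_inc (n - 1)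
  have h2 := StackAux.prod_inc n
  linear_combination (X 0 * X 1 ^ n * X 2 ^ n *
      ((∏ i ∈ Finset.range n, (1 - X 0 * X 2 ^ (i + 1) : MvPowerSeries (Fin 3) ℚ)) *
        StackAux.incGF n)) * h1
    + (X 0 * X 1 ^ n * X 2 ^ n : MvPowerSeries (Fin 3) ℚ) * h2
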